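/- arXiv:2307.16203 — 5 statements merged into one kernel-verified Lean document; each statement's English description precedes it below -/
import Mathlib

section
/- Translation-equivalence of multi-layer zero-padded convolution: with d_0 = d, d_ℓ = d + ℓs, filters w¹,…,w^L supported on {0,…,s}, v ∈ ℝ^d supported on {1,…,p}, and 1 ≤ j ≤ d - p + 1, one has w^L * ⋯ * w¹ * (A_{j,d} v) = A_{j,d_L} (w^L * ⋯ * w¹ * v), where each * denotes the zero-padded convolution mapping ℝ^{d_{ℓ-1}} → ℝ^{d_ℓ}. -/
/-- A sequence `w : ℤ → ℝ` is supported on `{0,…,s}`. -/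
def SuppOn (s : ℕ) (w : ℤ → ℝ) : Prop :=
  ∀ j : ℤ, (j < 0 ∨ (s : ℤ) < j) → w j = 0

/-- Zero-padded convolution of a filter `w` with a vector `v ∈ ℝ^n`,
viewed in `ℝ^m`: `(w * v)_j = Σ_{k=1}^{n} w_{j-k} v_k`. -/
def convVecD (w : ℤ → ℝ) {n m : ℕ} (v : Fin n → ℝ) : Fin m → ℝ :=
  fun j => ∑ k : Fin n, w ((j : ℤ) - (k : ℤ)) * v k

/-- Iterated zero-padded convolution `w^L * ⋯ * w¹ * v` with layer widths
`D 0, D 1, …, D L`. -/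
def iterConvVec (w : ℕ → ℤ → ℝ) (D : ℕ → ℕ) :
    (L : ℕ) → (Fin (D 0) → ℝ) → Fin (D L) → ℝ
  | 0, v => v
  | L + 1, v => convVecD (w L) (iterConvVec w D L v)

/-- The shift matrix `A_{j,d}` (1-based `j`). -/
def shiftMat (d j : ℕ) : Matrix (Fin d) (Fin d) ℝ :=
  Matrix.of fun i k => if (i : ℕ) = (k : ℕ) + (j - 1) then 1 else 0

lemma shift_apply (d t : ℕ) (u : Fin d → ℝ) (i : Fin d) :
    (shiftMat d (t+1)).mulVec u i =
      if h : t ≤ (i : ℕ) then u ⟨(i:ℕ) - t, lt_of_le_of_lt (Nat.sub_le _ _) i.isLt⟩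
      else 0 := by
  unfold shiftMat Matrix.mulVec dotProduct
  simp only [Matrix.of_apply, ite_mul, one_mul, zero_mul, Nat.add_sub_cancel]
  split_ifs with h
  · rw [Finset.sum_eq_single (⟨(i:ℕ) - t, lt_of_le_of_lt (Nat.sub_le _ _) i.isLt⟩ : Fin d)]
    · rw [if_pos]; simp; omega
    · intro b _ hb
      rw [if_neg]; intro hc; apply hb; apply Fin.ext; simp; omega
    · simp
  · apply Finset.sum_eq_zero
    intro k _
    rw [if_neg]; omega

lemma iter_supp (s p : ℕ) (D : ℕ → ℕ) (hD : ∀ k, D (k+1) = D k + s)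
    (w : ℕ → ℤ → ℝ) (hw : ∀ k, SuppOn s (w k)) (v : Fin (D 0) → ℝ)
    (hv : ∀ i : Fin (D 0), p ≤ (i:ℕ) → v i = 0) :
    ∀ L, ∀ i : Fin (D L), p + L * s ≤ (i:ℕ) → iterConvVec w D L v i = 0 := by
  intro L
  induction L with
  | zero => intro i hi; exact hv i (by omega)
  | succ L ih =>
    intro i hi
    show convVecD (w L) (iterConvVec w D L v) i = 0
    unfold convVecD
    apply Finset.sum_eq_zero
    intro k _
    by_cases hk : p + L * s ≤ (k:ℕ)
    · rw [ih k hk, mul_zero]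
    · rw [hw L ((i:ℤ) - (k:ℤ)) ?_, zero_mul]
      right
      have hi' : p + (L * s + s) ≤ (i:ℕ) := by rw [Nat.succ_mul] at hi; omega
      push_cast
      omega

lemma conv_shift (s t q : ℕ) {n m : ℕ} (w : ℤ → ℝ) (hw : SuppOn s w)
    (u : Fin n → ℝ) (hu : ∀ k : Fin n, q ≤ (k : ℕ) → u k = 0) (htq : t + q ≤ n) :
    (convVecD w ((shiftMat n (t+1)).mulVec u) : Fin m → ℝ)
      = (shiftMat m (t+1)).mulVec (convVecD w u) := by
  funext i
  rw [shift_apply]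
  set U : ℕ → ℝ := fun k => if h : k < n then u ⟨k, h⟩ else 0 with hU
  have hUz : ∀ k, q ≤ k → U k = 0 := by
    intro k hk
    by_cases h : k < n
    · simp only [hU, dif_pos h]; exact hu ⟨k, h⟩ hk
    · simp only [hU, dif_neg h]
  have lhs_eq : (convVecD w ((shiftMat n (t+1)).mulVec u) : Fin m → ℝ) i
      = ∑ k ∈ Finset.range n, w ((i:ℤ) - (k:ℤ)) * (if t ≤ k then U (k - t) else 0) := by
    unfold convVecD
    rw [← Fin.sum_univ_eq_sum_range (fun k => w ((i:ℤ) - (k:ℤ)) * (if t ≤ k then U (k - t) else 0))]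
    apply Finset.sum_congr rfl
    intro k _
    rw [shift_apply]
    congr 1
    split_ifs with h
    · simp only [hU, dif_pos (show (k:ℕ) - t < n from lt_of_le_of_lt (Nat.sub_le _ _) k.isLt)]
    · rfl
  by_cases h : t ≤ (i : ℕ)
  · rw [dif_pos h, lhs_eq]
    have hrhs : (convVecD w u : Fin m → ℝ)
        ⟨(i:ℕ) - t, lt_of_le_of_lt (Nat.sub_le _ _) i.isLt⟩
        = ∑ k ∈ Finset.range n, w (((i:ℕ) - t : ℕ) - (k:ℤ)) * U k := by
      unfold convVecD
      rw [← Fin.sum_univ_eq_sum_range (fun k => w (((i:ℕ) - t : ℕ) - (k:ℤ)) * U k)]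
      apply Finset.sum_congr rfl
      intro k _
      simp only [hU, dif_pos k.isLt]
    rw [hrhs]
    have hn : n = t + (n - t) := by omega
    have hcast : (((i:ℕ) - t : ℕ) : ℤ) = (i:ℤ) - t := by omega
    conv_lhs => rw [hn, Finset.sum_range_add]
    conv_rhs => rw [show n = (n - t) + t by omega, Finset.sum_range_add]
    have h1 : ∑ k ∈ Finset.range t, w ((i:ℤ) - (k:ℤ)) * (if t ≤ k then U (k - t) else 0) = 0 := by
      apply Finset.sum_eq_zero
      intro k hk
      rw [if_neg (by simp at hk; omega), mul_zero]
    have h2 : ∑ k ∈ Finset.range t, w (((i:ℕ) - t : ℕ) - ((n - t + k : ℕ):ℤ)) * U (n - t + k) = 0 := by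
      apply Finset.sum_eq_zero
      intro k _
      rw [hUz (n - t + k) (by omega), mul_zero]
    rw [h1, h2, zero_add, add_zero]
    apply Finset.sum_congr rfl
    intro k _
    rw [if_pos (by omega)]
    congr 2
    · push_cast; omega
    · omega
  · rw [dif_neg h, lhs_eq]
    apply Finset.sum_eq_zero
    intro k hk
    by_cases hkt : t ≤ k
    · rw [hw ((i:ℤ) - (k:ℤ)) (Or.inl (by omega)), zero_mul]
    · rw [if_neg hkt, mul_zero]


/-- Translation-equivalence of multi-layer zero-padded convolution:
with `d_0 = d`, `d_ℓ = d + ℓ s`, filters supported on `{0,…,s}`, `v` supported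
on the first `p` coordinates and `1 ≤ j ≤ d - p + 1`,
`w^L * ⋯ * w¹ * (A_{j,d} v) = A_{j,d_L} (w^L * ⋯ * w¹ * v)`. -/
theorem iterConv_shift_comm (s p j L : ℕ) (hs : 2 ≤ s)
    (D : ℕ → ℕ) (hD : ∀ k, D (k + 1) = D k + s) (hsd : s ≤ D 0)
    (w : ℕ → ℤ → ℝ) (hw : ∀ k, SuppOn s (w k))
    (v : Fin (D 0) → ℝ) (hp : 1 ≤ p) (hpd : p ≤ D 0)
    (hv : ∀ i : Fin (D 0), p ≤ (i : ℕ) → v i = 0)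
    (hj1 : 1 ≤ j) (hj : j ≤ D 0 - p + 1) :
    iterConvVec w D L ((shiftMat (D 0) j).mulVec v) =
      (shiftMat (D L) j).mulVec (iterConvVec w D L v) := by
  obtain ⟨t, rfl⟩ : ∃ t, j = t + 1 := ⟨j - 1, by omega⟩
  have hDL : ∀ K, D K = D 0 + K * s := by
    intro K
    induction K with
    | zero => simp
    | succ K ih => rw [hD, ih, Nat.succ_mul]; omega
  have htp : t + p ≤ D 0 := by omega
  induction L with
  | zero =>
    funext i
    show (shiftMat (D 0) (t+1)).mulVec v i = _
    rfl
  | succ L ih =>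
    show convVecD (w L) (iterConvVec w D L ((shiftMat (D 0) (t+1)).mulVec v)) = _
    rw [ih]
    rw [conv_shift s t (p + L * s) (w L) (hw L) (iterConvVec w D L v)
        (iter_supp s p D hD w hw v hv L)
        (by have := hDL L; omega)]
    rfl
end

section
/- Failure of translation-equivalence for contracting convolution: for any d' ≥ s + p + 1 with s ≥ 2, there exist a filter w supported on {0,…,s}, a vector v supported on {1,…,p}, and an index j ∈ {1,…,d'-p+1} such that A_{j,d'-s}(w ⋆ v) ≠ w ⋆ (A_{j,d'} v), where ⋆ is the contracting (valid, no-padding) convolution (w ⋆ v)_j = Σ_{k=j-s}^{j} w_{j-k} v_{k+s}, j = 1,…,d'-s. -/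
/-- 1-based extension of a vector `v ∈ ℝ^{d'}` by zeros: `vext v n = v_n`
for `1 ≤ n ≤ d'` (1-based) and `0` otherwise. -/
def vext {d' : ℕ} (v : Fin d' → ℝ) : ℕ → ℝ :=
  fun n => if h : 1 ≤ n ∧ n ≤ d' then v ⟨n - 1, by omega⟩ else 0

/-- Contracting (valid, no zero-padding) convolution
`(w ⋆ v)_j = Σ_{k=j-s}^{j} w_{j-k} v_{k+s} = Σ_{i=0}^s w_i v_{j+s-i}`,
mapping `ℝ^{d'} → ℝ^{d'-s}` (1-based indices). -/
def cconv (s d' : ℕ) (w : ℤ → ℝ) (v : Fin d' → ℝ) : Fin (d' - s) → ℝ :=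
  fun j => ∑ i ∈ Finset.range (s + 1), w i * vext v ((j : ℕ) + 1 + s - i)

/-- Failure of translation-equivalence for the contracting convolution:
for `s ≥ 2`, `p ≥ 1` and `d' ≥ s + p + 1`, there are a filter `w` supported on
`{0,…,s}`, a vector `v` supported on the first `p` coordinates, and an index
`j ∈ {1,…,d'-p+1}` with `A_{j,d'-s}(w ⋆ v) ≠ w ⋆ (A_{j,d'} v)`. -/
theorem cconv_not_translation_equivariant (d' s p : ℕ)
    (hs : 2 ≤ s) (hp : 1 ≤ p) (hd : s + p + 1 ≤ d') :
    ∃ (w : ℤ → ℝ) (v : Fin d' → ℝ) (j : ℕ),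
      SuppOn s w ∧ (∀ i : Fin d', p ≤ (i : ℕ) → v i = 0) ∧
      1 ≤ j ∧ j ≤ d' - p + 1 ∧
      (shiftMat (d' - s) j).mulVec (cconv s d' w v) ≠
        cconv s d' w ((shiftMat d' j).mulVec v) := by
  set W : ℤ → ℝ := fun k => if k = 0 then 1 else 0 with hW
  set V : Fin d' → ℝ := fun i => if (i : ℕ) = 0 then 1 else 0 with hV
  refine ⟨W, V, d' - p + 1, ?_, ?_, by omega, le_refl _, ?_⟩
  · intro j hj
    simp only [hW]
    rw [if_neg (by omega)]
  · intro i hi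
    simp only [hV]
    rw [if_neg (by omega)]
  · -- main inequality
    have hx : ∀ m : Fin (d' - s), cconv s d' W V m = 0 := by
      intro m
      unfold cconv
      apply Finset.sum_eq_zero
      intro i hi
      simp only [Finset.mem_range] at hi
      rcases Nat.eq_zero_or_pos i with h0 | h0
      · subst h0
        have : vext V ((m : ℕ) + 1 + s - 0) = 0 := by
          unfold vext
          split_ifs with h
          · simp only [hV]
            rw [if_neg (by omega)]
          · rfl
        rw [this, mul_zero]
      · have : W (i : ℤ) = 0 := by
          simp only [hW]; rw [if_neg (by exact_mod_cast Nat.pos_iff_ne_zero.mp h0 ∘ fun h => by exact_mod_cast h)]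
        rw [this, zero_mul]
    have hu : ∀ i : Fin d', Matrix.mulVec (shiftMat d' (d' - p + 1)) V i
        = if (i : ℕ) = d' - p then 1 else 0 := by
      intro i
      unfold Matrix.mulVec dotProduct shiftMat
      simp only [Matrix.of_apply, hV]
      rw [Fintype.sum_eq_single (⟨0, by omega⟩ : Fin d')]
      · have h1 : d' - p + 1 - 1 = d' - p := by omega
        simp [h1]
      · intro k hk
        have hk0 : (k : ℕ) ≠ 0 := fun h => hk (by ext; simpa using h)
        rw [if_neg hk0, mul_zero]
    intro h
    have h0 := congrFun h ⟨d' - p - s, by omega⟩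
    rw [show ((shiftMat (d' - s) (d' - p + 1)).mulVec (cconv s d' W V)) ⟨d' - p - s, by omega⟩ = 0 from ?_ ] at h0
    · -- RHS = 1
      have : cconv s d' W (Matrix.mulVec (shiftMat d' (d' - p + 1)) V) ⟨d' - p - s, by omega⟩ = 1 := by
        unfold cconv
        rw [Finset.sum_eq_single 0]
        · simp only [Nat.cast_zero, Nat.sub_zero]
          have hn : (d' - p - s) + 1 + s = d' - p + 1 := by omega
          rw [hn]
          have : vext (Matrix.mulVec (shiftMat d' (d' - p + 1)) V) (d' - p + 1) = 1 := by
            unfold vext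
            rw [dif_pos (by omega)]
            rw [hu]
            rw [if_pos (by simp)]
          rw [this]
          simp [hW]
        · intro i hi h0
          have : W (i : ℤ) = 0 := by
            simp only [hW]; rw [if_neg (by exact_mod_cast h0)]
          rw [this, zero_mul]
        · intro h; exact absurd (Finset.mem_range.mpr (by omega)) h
      rw [this] at h0
      norm_num at h0
    · unfold Matrix.mulVec dotProduct
      apply Finset.sum_eq_zero
      intro k _
      rw [hx, mul_zero]
end

section
/- Translation-invariance of eDCNN with location-based pooling: let d_0 = d, d_ℓ = d + ℓs, filters w¹,…,w^L supported on {0,…,s}, and define the pooling S_{d_L,d,j}(v) = (v_{kd+j})_{k=1}^{[d_L/d]} (with out-of-range entries set to 0). Then for a vector v ∈ ℝ^d supported on {1,…,p} and any 1 ≤ j, j' ≤ d - p + 1, S_{d_L,d,j}(w^L * ⋯ * w¹ * v_{p,d,j}) = S_{d_L,d,j'}(w^L * ⋯ * w¹ * v_{p,d,j'}), where v_{p,d,j} = A_{j,d} v is the translate of v to support {j,…,j+p-1}. -/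
/-- Location-based pooling `S_{d',u,j}`: the `k`-th pooled entry (`k ≥ 1`)
is `v_{ku+j}` (1-based), with out-of-range entries set to `0`. -/
def pool (d' u j : ℕ) (v : Fin d' → ℝ) : ℕ → ℝ :=
  fun k => vext v (k * u + j)

/-- 0-based ℤ-extension of a vector by zeros. -/
def extZ {n : ℕ} (v : Fin n → ℝ) : ℤ → ℝ :=
  fun i => if h : 0 ≤ i ∧ i < (n : ℤ) then v ⟨i.toNat, by omega⟩ else 0

lemma extZ_eq_zero {n : ℕ} (v : Fin n → ℝ) {i : ℤ} (h : i < 0 ∨ (n : ℤ) ≤ i) :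
    extZ v i = 0 := by
  unfold extZ; rw [dif_neg]; omega

lemma vext_eq_extZ {d' : ℕ} (v : Fin d' → ℝ) (n : ℕ) :
    vext v n = extZ v ((n : ℤ) - 1) := by
  unfold vext extZ
  by_cases h : 1 ≤ n ∧ n ≤ d'
  · rw [dif_pos h, dif_pos (by omega)]
    congr 1
    apply Fin.ext
    simp only [Fin.val_mk]
    omega
  · rw [dif_neg h, dif_neg (by omega)]

lemma shiftMat_mulVec {d : ℕ} (j : ℕ) (v : Fin d → ℝ) (m : Fin d) :
    (shiftMat d j).mulVec v m =
      if h : j - 1 ≤ (m : ℕ) then v ⟨(m : ℕ) - (j - 1), by omega⟩ else 0 := by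
  unfold shiftMat Matrix.mulVec dotProduct
  by_cases h : j - 1 ≤ (m : ℕ)
  · rw [dif_pos h]
    rw [Finset.sum_eq_single (⟨(m : ℕ) - (j - 1), by omega⟩ : Fin d)]
    · simp only [Matrix.of_apply, Fin.val_mk]
      rw [if_pos (by omega), one_mul]
    · intro k _ hk
      simp only [Matrix.of_apply]
      rw [if_neg, zero_mul]
      intro hc; apply hk
      apply Fin.ext
      simp only [Fin.val_mk]
      omega
    · simp
  · rw [dif_neg h]
    apply Finset.sum_eq_zero
    intro k _
    simp only [Matrix.of_apply]
    rw [if_neg (by omega), zero_mul]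

lemma extZ_shift {d p : ℕ} (j : ℕ) (v : Fin d → ℝ) (hpd : p ≤ d)
    (hv : ∀ i : Fin d, p ≤ (i : ℕ) → v i = 0)
    (hj1 : 1 ≤ j) (hj : j ≤ d - p + 1) (i : ℤ) :
    extZ ((shiftMat d j).mulVec v) (i + ((j : ℤ) - 1)) = extZ v i := by
  unfold extZ
  by_cases h1 : 0 ≤ i + ((j : ℤ) - 1) ∧ i + ((j : ℤ) - 1) < (d : ℤ)
  · rw [dif_pos h1, shiftMat_mulVec]
    by_cases h2 : 0 ≤ i ∧ i < (d : ℤ)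
    · rw [dif_pos h2, dif_pos (by simp only [Fin.val_mk]; omega)]
      congr 1
      apply Fin.ext
      simp only [Fin.val_mk]
      omega
    · rw [dif_neg h2]
      rw [dif_neg (by simp only [Fin.val_mk]; omega)]
  · rw [dif_neg h1]
    by_cases h2 : 0 ≤ i ∧ i < (d : ℤ)
    · rw [dif_pos h2]
      refine (hv _ ?_).symm
      simp only [Fin.val_mk]
      omega
    · rw [dif_neg h2]

lemma ext_conv {s n m : ℕ} (w : ℤ → ℝ) (hw : SuppOn s w) (hm : n + s ≤ m)
    (u : Fin n → ℝ) (i : ℤ) :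
    extZ (convVecD w u : Fin m → ℝ) i = ∑ k : Fin n, w (i - ((k : ℕ) : ℤ)) * u k := by
  unfold extZ
  by_cases h : 0 ≤ i ∧ i < (m : ℤ)
  · rw [dif_pos h]
    unfold convVecD
    apply Finset.sum_congr rfl
    intro k _
    congr 2
    simp only [Fin.val_mk]
    omega
  · rw [dif_neg h]
    symm; apply Finset.sum_eq_zero
    intro k _
    have hk : ((k : ℕ) : ℤ) < (n : ℤ) := by exact_mod_cast k.isLt
    have hk0 : (0 : ℤ) ≤ ((k : ℕ) : ℤ) := Int.natCast_nonneg _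
    rw [hw (i - ((k : ℕ) : ℤ)) (by omega), zero_mul]

lemma sum_extZ {n : ℕ} (u : Fin n → ℝ) (g : ℤ → ℝ) (a b : ℤ)
    (ha : a ≤ 0) (hb : (n : ℤ) - 1 ≤ b) :
    ∑ t ∈ Finset.Icc a b, g t * extZ u t = ∑ k : Fin n, g ((k : ℕ) : ℤ) * u k := by
  have h1 : ∑ k : Fin n, g ((k : ℕ) : ℤ) * u k
      = ∑ k ∈ Finset.range n, g ((k : ℕ) : ℤ) * extZ u ((k : ℕ) : ℤ) := by
    rw [← Fin.sum_univ_eq_sum_range (fun k => g ((k : ℕ) : ℤ) * extZ u ((k : ℕ) : ℤ)) n]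
    apply Finset.sum_congr rfl
    intro k _
    have hk : (k : ℕ) < n := k.isLt
    unfold extZ
    rw [dif_pos (by omega)]
    congr 1
  rw [h1]
  have h2 : (Finset.range n).map ⟨(Nat.cast : ℕ → ℤ), Nat.cast_injective⟩
      = Finset.Icc (0 : ℤ) ((n : ℤ) - 1) := by
    ext t
    simp only [Finset.mem_map, Finset.mem_range, Function.Embedding.coeFn_mk, Finset.mem_Icc]
    constructor
    · rintro ⟨k, hk, rfl⟩; omega
    · intro ht; exact ⟨t.toNat, by omega, by omega⟩
  have h3 : ∑ k ∈ Finset.range n, g ((k : ℕ) : ℤ) * extZ u ((k : ℕ) : ℤ)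
      = ∑ t ∈ Finset.Icc (0 : ℤ) ((n : ℤ) - 1), g t * extZ u t := by
    rw [← h2, Finset.sum_map]
    rfl
  rw [h3]
  apply (Finset.sum_subset ?_ ?_).symm
  · intro t ht
    simp only [Finset.mem_Icc] at ht ⊢
    omega
  · intro t _ ht
    simp only [Finset.mem_Icc, not_and_or, not_le] at ht
    rw [extZ_eq_zero u (by omega), mul_zero]

lemma sum_Icc_translate (f : ℤ → ℝ) (a b c : ℤ) :
    ∑ m ∈ Finset.Icc a b, f (m + c) = ∑ t ∈ Finset.Icc (a + c) (b + c), f t := by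
  rw [← Finset.map_add_right_Icc a b c, Finset.sum_map]
  rfl

lemma key (s p j j' : ℕ) (D : ℕ → ℕ) (hD : ∀ k, D (k + 1) = D k + s)
    (w : ℕ → ℤ → ℝ) (hw : ∀ k, SuppOn s (w k))
    (v : Fin (D 0) → ℝ) (hpd : p ≤ D 0) (hp : 1 ≤ p)
    (hv : ∀ i : Fin (D 0), p ≤ (i : ℕ) → v i = 0)
    (hj1 : 1 ≤ j) (hj : j ≤ D 0 - p + 1)
    (hj'1 : 1 ≤ j') (hj' : j' ≤ D 0 - p + 1) :
    ∀ L, ∀ i : ℤ,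
      extZ (iterConvVec w D L ((shiftMat (D 0) j).mulVec v)) (i + ((j : ℤ) - 1)) =
      extZ (iterConvVec w D L ((shiftMat (D 0) j').mulVec v)) (i + ((j' : ℤ) - 1)) := by
  have hDge : ∀ L, D 0 ≤ D L := by
    intro L
    induction L with
    | zero => exact le_refl _
    | succ L ih => rw [hD]; omega
  intro L
  induction L with
  | zero =>
    intro i
    show extZ ((shiftMat (D 0) j).mulVec v) _ = extZ ((shiftMat (D 0) j').mulVec v) _
    rw [extZ_shift j v hpd hv hj1 hj, extZ_shift j' v hpd hv hj'1 hj']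
  | succ L ih =>
    intro i
    have hDL := hDge L
    have hcj : (1 : ℤ) ≤ (j : ℤ) ∧ (j : ℤ) - 1 ≤ (D L : ℤ) := by
      constructor <;> omega
    have hcj' : (1 : ℤ) ≤ (j' : ℤ) ∧ (j' : ℤ) - 1 ≤ (D L : ℤ) := by
      constructor <;> omega
    have hm : D L + s ≤ D (L + 1) := by rw [hD]
    show extZ (convVecD (w L) (iterConvVec w D L ((shiftMat (D 0) j).mulVec v))) _ = extZ (convVecD (w L) (iterConvVec w D L ((shiftMat (D 0) j').mulVec v))) _
    rw [ext_conv (w L) (hw L) hm, ext_conv (w L) (hw L) hm]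
    set uj := iterConvVec w D L ((shiftMat (D 0) j).mulVec v) with huj
    set uj' := iterConvVec w D L ((shiftMat (D 0) j').mulVec v) with huj'
    set c : ℤ := (j : ℤ) - 1 with hcdef
    set c' : ℤ := (j' : ℤ) - 1 with hc'def
    have e1 : ∑ k : Fin (D L), w L (i + c - ((k : ℕ) : ℤ)) * uj k
        = ∑ t ∈ Finset.Icc (-(D L : ℤ)) (2 * (D L : ℤ)), w L (i + c - t) * extZ uj t := by
      rw [sum_extZ uj (fun t => w L (i + c - t)) _ _ (by omega) (by omega)]
    have e2 : ∑ k : Fin (D L), w L (i + c' - ((k : ℕ) : ℤ)) * uj' k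
        = ∑ t ∈ Finset.Icc (-(D L : ℤ) - c + c') (2 * (D L : ℤ) - c + c'),
            w L (i + c' - t) * extZ uj' t := by
      rw [sum_extZ uj' (fun t => w L (i + c' - t)) _ _ (by omega) (by omega)]
    have e3 : ∑ t ∈ Finset.Icc (-(D L : ℤ)) (2 * (D L : ℤ)), w L (i + c - t) * extZ uj t
        = ∑ m ∈ Finset.Icc (-(D L : ℤ) - c) (2 * (D L : ℤ) - c),
            w L (i - m) * extZ uj (m + c) := by
      have h := sum_Icc_translate (fun t => w L (i + c - t) * extZ uj t)
        (-(D L : ℤ) - c) (2 * (D L : ℤ) - c) c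
      simp only [sub_add_cancel] at h
      rw [← h]
      apply Finset.sum_congr rfl
      intro m _
      congr 2
      ring
    have e4 : ∑ m ∈ Finset.Icc (-(D L : ℤ) - c) (2 * (D L : ℤ) - c),
            w L (i - m) * extZ uj' (m + c')
        = ∑ t ∈ Finset.Icc (-(D L : ℤ) - c + c') (2 * (D L : ℤ) - c + c'),
            w L (i + c' - t) * extZ uj' t := by
      have h := sum_Icc_translate (fun t => w L (i + c' - t) * extZ uj' t)
        (-(D L : ℤ) - c) (2 * (D L : ℤ) - c) c'
      rw [← h]
      apply Finset.sum_congr rfl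
      intro m _
      congr 2
      ring
    rw [e1, e2, e3, ← e4]
    apply Finset.sum_congr rfl
    intro m _
    rw [ih m]

/-- Translation-invariance of eDCNN with location-based pooling: with
`d_ℓ = D ℓ`, `D 0 = d`, `D (ℓ+1) = D ℓ + s`, filters supported on `{0,…,s}`,
`v` supported on the first `p` coordinates and `1 ≤ j, j' ≤ d - p + 1`,
`S_{d_L,d,j}(w^L * ⋯ * w¹ * A_{j,d} v) = S_{d_L,d,j'}(w^L * ⋯ * w¹ * A_{j',d} v)`
on all pooled coordinates `k = 1,…,[d_L/d]`. -/
theorem pooled_iterConv_translation_invariant (s p j j' L : ℕ) (hs : 2 ≤ s)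
    (D : ℕ → ℕ) (hD : ∀ k, D (k + 1) = D k + s) (hsd : s ≤ D 0)
    (w : ℕ → ℤ → ℝ) (hw : ∀ k, SuppOn s (w k))
    (v : Fin (D 0) → ℝ) (hp : 1 ≤ p) (hpd : p ≤ D 0)
    (hv : ∀ i : Fin (D 0), p ≤ (i : ℕ) → v i = 0)
    (hj1 : 1 ≤ j) (hj : j ≤ D 0 - p + 1)
    (hj'1 : 1 ≤ j') (hj' : j' ≤ D 0 - p + 1) :
    ∀ k : ℕ, 1 ≤ k → k ≤ D L / D 0 →
      pool (D L) (D 0) j (iterConvVec w D L ((shiftMat (D 0) j).mulVec v)) k =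
        pool (D L) (D 0) j' (iterConvVec w D L ((shiftMat (D 0) j').mulVec v)) k := by
  intro k _ _
  unfold pool
  rw [vext_eq_extZ, vext_eq_extZ]
  have h1 : ((k * D 0 + j : ℕ) : ℤ) - 1 = ((k * D 0 : ℕ) : ℤ) + ((j : ℤ) - 1) := by
    push_cast; ring
  have h2 : ((k * D 0 + j' : ℕ) : ℤ) - 1 = ((k * D 0 : ℕ) : ℤ) + ((j' : ℤ) - 1) := by
    push_cast; ring
  rw [h1, h2]
  exact key s p j j' D hD w hw v hpd hp hv hj1 hj hj'1 hj' L ((k * D 0 : ℕ) : ℤ)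
end

section
/- Stacking-rows factorization: for any matrix W ∈ ℝ^{ñ×d'} define the sequence u supported on {0,…,d'ñ−1} by stacking the columns appropriately so that the Toeplitz matrix T^u ∈ ℝ^{(d'ñ)×d'} (entries (T^u)_{i,k} = u_{i-k}) has its (j d')-th row equal to the j-th row of W for j = 1,…,ñ. Then the location-based pooling S with scale d' and offset 0 applied to T^u x recovers W x: S_{d'ñ, d', 0}(T^u x) = W x for all x ∈ ℝ^{d'}. -/
/-- The `m × n` Toeplitz matrix of a filter `w`, with `(i,k)`-entry `w_{i-k}`. -/
def toep (m n : ℕ) (w : ℤ → ℝ) : Matrix (Fin m) (Fin n) ℝ :=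
  Matrix.of fun i k => w ((i : ℤ) - (k : ℤ))

/-- Stacking-rows factorization: if `u` is supported on `{0,…,d'ñ-1}` and the
`(jd')`-th row of the Toeplitz matrix `T^u ∈ ℝ^{(d'ñ)×d'}` equals the `j`-th
row of `W` (i.e. `u_{jd'-k} = W_{j,k}`, 1-based), then pooling with scale `d'`
and offset `0` applied to `T^u x` recovers `W x`. -/
theorem pool_toep_stacked_rows (d' n : ℕ) (hd : 1 ≤ d') (hn : 1 ≤ n)
    (W : Matrix (Fin n) (Fin d') ℝ) (u : ℤ → ℝ)
    (hsupp : SuppOn (d' * n - 1) u)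
    (hrow : ∀ (j : Fin n) (k : Fin d'),
      u ((((j : ℕ) + 1) * d' : ℤ) - (((k : ℕ) : ℤ) + 1)) = W j k)
    (x : Fin d' → ℝ) :
    ∀ i : Fin n,
      pool (d' * n) d' 0 ((toep (d' * n) d' u).mulVec x) ((i : ℕ) + 1) =
        W.mulVec x i := by

  intro i
  have hi : (i : ℕ) < n := i.isLt
  have hle : ((i : ℕ) + 1) * d' + 0 ≤ d' * n := by
    have : (i : ℕ) + 1 ≤ n := hi
    calc ((i : ℕ) + 1) * d' + 0 = ((i : ℕ) + 1) * d' := by ring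
    _ ≤ n * d' := Nat.mul_le_mul_right d' this
    _ = d' * n := Nat.mul_comm n d'
  have h1 : 1 ≤ ((i : ℕ) + 1) * d' + 0 := by
    have := Nat.mul_pos (show 0 < (i : ℕ) + 1 by omega) hd
    omega
  unfold pool vext
  rw [dif_pos ⟨h1, hle⟩]
  unfold toep Matrix.mulVec dotProduct
  apply Finset.sum_congr rfl
  intro k _
  simp only [Matrix.of_apply]
  rw [← hrow i k]
  congr 1
  have key : (((((i : ℕ) + 1) * d' + 0 - 1 : ℕ)) : ℤ)
      = (((((i : ℕ) + 1) * d' + 0 : ℕ)) : ℤ) - 1 := by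
    omega
  rw [key]
  push_cast
  ring
end

section
/- Convolutional factorization of arbitrary linear maps: let 2 ≤ s ≤ d', ñ ∈ ℕ, and W ∈ ℝ^{ñ×d'}. Then there exist L* = ⌈d'ñ/(s-1)⌉ filters w¹,…,w^{L*} each supported on {0,…,s} such that W x = S_{d'+L*s, d', 0}(w^{L*} * ⋯ * w¹ * x) for all x ∈ ℝ^{d'}, assuming the filter-factorization property: any sequence supported on {0,…,S} factors as a convolution of fewer than S/(s-1)+1 filters supported on {0,…,s}. -/
/-- Zero-padded (full) convolution of sequences. -/
noncomputable def convSeq (w v : ℤ → ℝ) : ℤ → ℝ :=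
  fun j => ∑ᶠ k : ℤ, w (j - k) * v k

/-- The delta filter (identity for convolution). -/
def deltaF : ℤ → ℝ := fun j => if j = 0 then 1 else 0

/-- Iterated convolution of filters: `iterFilter w L = w^L * ⋯ * w¹`. -/
noncomputable def iterFilter (w : ℕ → ℤ → ℝ) : ℕ → ℤ → ℝ
  | 0 => deltaF
  | L + 1 => convSeq (w L) (iterFilter w L)

-- auxiliary lemmas
lemma suppOn_delta (s : ℕ) : SuppOn s deltaF := by
  intro j hj
  have hj0 : j ≠ 0 := by omega
  simp only [deltaF, if_neg hj0]

lemma suppOn_iterFilter {s : ℕ} {ws : ℕ → ℤ → ℝ} (h : ∀ k, SuppOn s (ws k)) :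
    ∀ L, SuppOn (s * L) (iterFilter ws L) := by
  intro L
  induction L with
  | zero => simpa [iterFilter] using suppOn_delta 0
  | succ L ih =>
    intro j hj
    show convSeq (ws L) (iterFilter ws L) j = 0
    unfold convSeq
    apply finsum_eq_zero_of_forall_eq_zero
    intro k
    by_cases hk : k < 0 ∨ (s * L : ℤ) < k
    · rw [ih k hk, mul_zero]
    · push_neg at hk
      have hsl : ((s:ℤ)) * ((L:ℤ) + 1) = (s:ℤ) * (L:ℤ) + s := by ring
      rw [h L (j - k) (by push_cast at hj ⊢; omega), zero_mul]

lemma convSeq_delta (f : ℤ → ℝ) : convSeq deltaF f = f := by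
  funext j
  unfold convSeq
  rw [finsum_eq_single _ j]
  · simp [deltaF]
  · intro x hx
    simp only [deltaF, if_neg (show j - x ≠ 0 by omega), zero_mul]

lemma iterFilter_congr {ws ws' : ℕ → ℤ → ℝ} :
    ∀ L, (∀ k < L, ws k = ws' k) → iterFilter ws L = iterFilter ws' L := by
  intro L
  induction L with
  | zero => intro _; rfl
  | succ L ih =>
    intro h
    show convSeq (ws L) _ = convSeq (ws' L) _
    rw [h L (by omega), ih (fun k hk => h k (by omega))]

lemma convSeq_eq_fin_sum {M N : ℕ} (w F : ℤ → ℝ) (hF : SuppOn M F) (j k : ℤ)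
    (hk : 0 ≤ k) (hMN : k + M < N) :
    convSeq w F (j - k) = ∑ m : Fin N, w (j - (m : ℤ)) * F ((m : ℤ) - k) := by
  unfold convSeq
  have hsub : Function.support (fun t => w (j - k - t) * F t) ⊆
      ↑((Finset.univ : Finset (Fin N)).image (fun m : Fin N => (m : ℤ) - k)) := by
    intro t ht
    have hFt : F t ≠ 0 := by
      intro h0
      apply ht
      simp [h0]
    have h1 : 0 ≤ t ∧ t ≤ (M : ℤ) := by
      by_contra hc
      exact hFt (hF t (by omega))
    simp only [Finset.coe_image, Finset.coe_univ, Set.image_univ, Set.mem_range]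
    refine ⟨⟨(t + k).toNat, ?_⟩, ?_⟩
    · omega
    · simp only [Fin.val_mk]
      omega
  rw [finsum_eq_finset_sum_of_support_subset _ hsub,
    Finset.sum_image (by intro x _ y _ h; exact Fin.ext (by have h' : ((x : ℕ) : ℤ) - k = ((y : ℕ) : ℤ) - k := h; omega))]
  refine Finset.sum_congr rfl fun m _ => ?_
  have : j - k - ((m : ℤ) - k) = j - (m : ℤ) := by ring
  rw [this]

lemma iterConvVec_eq {s d' : ℕ} {ws : ℕ → ℤ → ℝ} (hws : ∀ k, SuppOn s (ws k))
    (v : Fin d' → ℝ) :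
    ∀ L (j : Fin (d' + s * L)),
      iterConvVec ws (fun k => d' + s * k) L v j
        = ∑ k : Fin d', iterFilter ws L ((j : ℤ) - (k : ℤ)) * v k := by
  intro L
  induction L with
  | zero =>
    intro j
    show v j = ∑ k : Fin d', deltaF ((j : ℤ) - (k : ℤ)) * v k
    rw [Fintype.sum_eq_single (⟨j.1, by simpa using j.isLt⟩ : Fin d')]
    · simp [deltaF]
    · intro k hk
      have : (j : ℤ) - (k : ℤ) ≠ 0 := by
        intro h
        exact hk (Fin.ext (show (k:ℕ) = j.1 by omega))
      simp [deltaF, this]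
  | succ L ih =>
    intro j
    show convVecD (ws L) (iterConvVec ws (fun k => d' + s * k) L v) j = _
    unfold convVecD
    calc ∑ m : Fin (d' + s * L), ws L ((j:ℤ) - (m:ℤ)) *
            iterConvVec ws (fun k => d' + s * k) L v m
        = ∑ m : Fin (d' + s * L), ∑ k : Fin d',
            ws L ((j:ℤ) - (m:ℤ)) * (iterFilter ws L ((m:ℤ) - (k:ℤ)) * v k) := by
          refine Finset.sum_congr rfl fun m _ => ?_
          rw [ih m, Finset.mul_sum]
      _ = ∑ k : Fin d', (∑ m : Fin (d' + s * L),
            ws L ((j:ℤ) - (m:ℤ)) * iterFilter ws L ((m:ℤ) - (k:ℤ))) * v k := by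
          rw [Finset.sum_comm]
          refine Finset.sum_congr rfl fun k _ => ?_
          rw [Finset.sum_mul]
          refine Finset.sum_congr rfl fun m _ => ?_
          ring
      _ = ∑ k : Fin d', iterFilter ws (L + 1) ((j:ℤ) - (k:ℤ)) * v k := by
          refine Finset.sum_congr rfl fun k _ => ?_
          congr 1
          show _ = convSeq (ws L) (iterFilter ws L) ((j:ℤ) - (k:ℤ))
          rw [convSeq_eq_fin_sum (N := d' + s * L) (ws L) (iterFilter ws L)
            (suppOn_iterFilter hws L) (j:ℤ) (k:ℤ) (by omega) (by push_cast; omega)]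

noncomputable def targetSeq (d' n : ℕ) (W : Matrix (Fin n) (Fin d') ℝ)
    (hd : 0 < d') : ℤ → ℝ :=
  fun m => if h : 0 ≤ m ∧ m < ((d' * n : ℕ) : ℤ) then
    W ⟨m.toNat / d', Nat.div_lt_of_lt_mul (by omega)⟩
      ⟨d' - 1 - m.toNat % d', Nat.lt_of_le_of_lt (Nat.sub_le _ _) (Nat.sub_lt hd Nat.one_pos)⟩
  else 0

lemma targetSeq_suppOn (d' n : ℕ) (W : Matrix (Fin n) (Fin d') ℝ)
    (hd : 0 < d') (hn : 0 < n) : SuppOn (d' * n - 1) (targetSeq d' n W hd) := by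
  intro m hm
  have hdn : 1 ≤ d' * n := Nat.mul_pos hd hn
  unfold targetSeq
  rw [dif_neg]
  omega

lemma targetSeq_eval (d' n : ℕ) (W : Matrix (Fin n) (Fin d') ℝ)
    (hd : 0 < d') (i : Fin n) (k : Fin d') :
    targetSeq d' n W hd (((i : ℕ) * d' + (d' - 1 - (k : ℕ)) : ℕ) : ℤ) = W i k := by
  have h1 : (i : ℕ) * d' + d' ≤ n * d' := by
    have := Nat.mul_le_mul_right d' (show (i : ℕ) + 1 ≤ n from i.isLt)
    simpa [add_mul] using this
  have h2 : d' * n = n * d' := Nat.mul_comm _ _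
  have hk : (k : ℕ) < d' := k.isLt
  have hlt : (i : ℕ) * d' + (d' - 1 - (k : ℕ)) < d' * n := by omega
  unfold targetSeq
  rw [dif_pos (by constructor <;> [positivity; exact_mod_cast hlt])]
  have htn : (((i : ℕ) * d' + (d' - 1 - (k : ℕ)) : ℕ) : ℤ).toNat
      = (i : ℕ) * d' + (d' - 1 - (k : ℕ)) := Int.toNat_natCast _
  have hr : d' - 1 - (k : ℕ) < d' :=
    Nat.lt_of_le_of_lt (Nat.sub_le _ _) (Nat.sub_lt hd Nat.one_pos)
  have hdiv : ((i : ℕ) * d' + (d' - 1 - (k : ℕ))) / d' = (i : ℕ) := by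
    rw [add_comm, Nat.add_mul_div_right _ _ hd, Nat.div_eq_of_lt hr, Nat.zero_add]
  have hmod : ((i : ℕ) * d' + (d' - 1 - (k : ℕ))) % d' = d' - 1 - (k : ℕ) := by
    rw [add_comm, Nat.add_mul_mod_self_right, Nat.mod_eq_of_lt hr]
  congr 1
  · exact Fin.ext (by simp only [Fin.val_mk, htn, hdiv])
  · refine Fin.ext ?_
    simp only [Fin.val_mk, htn, hmod]
    omega

lemma iterFilter_pad {ws : ℕ → ℤ → ℝ} {L : ℕ} :
    ∀ M, L ≤ M → (∀ k, L ≤ k → ws k = deltaF) →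
      iterFilter ws M = iterFilter ws L := by
  intro M
  induction M with
  | zero => intro h _; rw [Nat.le_zero.mp h]
  | succ M ih =>
    intro hLM hdel
    rcases Nat.lt_or_ge L (M + 1) with h | h
    · have hLM' : L ≤ M := by omega
      show convSeq (ws M) (iterFilter ws M) = _
      rw [hdel M hLM', ih hLM' hdel, convSeq_delta]
    · rw [le_antisymm hLM h]

/-- Convolutional factorization of arbitrary linear maps: given the filter
factorization property (any sequence supported on `{0,…,S}` factors into fewer
than `S/(s-1)+1` filters supported on `{0,…,s}`), every `W ∈ ℝ^{ñ×d'}` is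
realized by `L* = ⌈d'ñ/(s-1)⌉` zero-padded convolutional layers followed by
location-based pooling with scale `d'` and offset `0`. -/
theorem conv_factorization_of_linear_maps (s d' n : ℕ)
    (hs : 2 ≤ s) (hsd : s ≤ d') (hn : 1 ≤ n)
    (W : Matrix (Fin n) (Fin d') ℝ)
    (Hfact : ∀ (S : ℕ) (u : ℤ → ℝ), SuppOn S u →
      ∃ (L : ℕ) (ws : ℕ → ℤ → ℝ), ((L : ℝ) < (S : ℝ) / ((s : ℝ) - 1) + 1) ∧
        (∀ k, SuppOn s (ws k)) ∧ u = iterFilter ws L) :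
    ∃ ws : ℕ → ℤ → ℝ, (∀ k, SuppOn s (ws k)) ∧
      ∀ (x : Fin d' → ℝ) (i : Fin n),
        pool (d' + s * ((d' * n + s - 2) / (s - 1))) d' 0
          (iterConvVec ws (fun k => d' + s * k) ((d' * n + s - 2) / (s - 1)) x)
          ((i : ℕ) + 1) = W.mulVec x i := by
  have hd : 0 < d' := by omega
  have hdn : 1 ≤ d' * n := Nat.mul_pos hd (by omega)
  set Lstar := (d' * n + s - 2) / (s - 1) with hLstar
  -- obtain factorization of the target sequence
  obtain ⟨L, ws0, hL, hws0, hu⟩ :=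
    Hfact (d' * n - 1) (targetSeq d' n W hd) (targetSeq_suppOn d' n W hd (by omega))
  -- bound L ≤ Lstar
  have hs1 : (0 : ℝ) < (s : ℝ) - 1 := by
    have : (2 : ℝ) ≤ (s : ℝ) := by exact_mod_cast hs
    linarith
  have hLle : L ≤ Lstar := by
    rw [div_add' _ _ _ (ne_of_gt hs1)] at hL
    have h2 := (lt_div_iff₀ hs1).mp hL
    have h3 : ((d' * n - 1 : ℕ) : ℝ) = ((d' * n : ℕ) : ℝ) - 1 := by
      rw [Nat.cast_sub hdn, Nat.cast_one]
    have h4 : (L : ℝ) * ((s : ℝ) - 1) < ((d' * n : ℕ) : ℝ) + (s : ℝ) - 2 := by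
      rw [h3] at h2; linarith
    have h5 : ((L * (s - 1) : ℕ) : ℝ) = (L : ℝ) * ((s : ℝ) - 1) := by
      rw [Nat.cast_mul, Nat.cast_sub (by omega : 1 ≤ s), Nat.cast_one]
    have h6 : ((d' * n + s - 2 : ℕ) : ℝ) = ((d' * n : ℕ) : ℝ) + (s : ℝ) - 2 := by
      rw [Nat.cast_sub (by omega : 2 ≤ d' * n + s), Nat.cast_add]
      norm_num
    have h7 : L * (s - 1) < d' * n + s - 2 := by
      have := h4
      rw [← h5, ← h6] at this
      exact_mod_cast this
    exact (Nat.le_div_iff_mul_le (by omega : 0 < s - 1)).mpr (by omega)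
  -- padded filters
  refine ⟨fun k => if k < L then ws0 k else deltaF, fun k => ?_, ?_⟩
  · by_cases h : k < L
    · simpa [h] using hws0 k
    · simpa [h] using suppOn_delta s
  intro x i
  set ws : ℕ → ℤ → ℝ := fun k => if k < L then ws0 k else deltaF with hws
  have hwsupp : ∀ k, SuppOn s (ws k) := by
    intro k
    by_cases h : k < L
    · simpa [hws, h] using hws0 k
    · simpa [hws, h] using suppOn_delta s
  have h1 : iterFilter ws L = iterFilter ws0 L :=
    iterFilter_congr L (fun k hk => by simp [hws, hk])
  have hiter : iterFilter ws Lstar = targetSeq d' n W hd := by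
    rw [iterFilter_pad Lstar hLle (fun k hk => by simp [hws, Nat.not_lt.mpr hk]), h1, ← hu]
  -- dimension bookkeeping
  have hmul : d' * n ≤ (s - 1) * Lstar := by
    have heq := Nat.div_add_mod (d' * n + s - 2) (s - 1)
    have hmod := Nat.mod_lt (d' * n + s - 2) (show 0 < s - 1 by omega)
    rw [← hLstar] at heq
    omega
  have hs2 : (s - 1) * Lstar ≤ s * Lstar := Nat.mul_le_mul_right _ (by omega)
  have hin : ((i : ℕ) + 1) * d' ≤ n * d' := Nat.mul_le_mul_right d' i.isLt
  have hnd : n * d' = d' * n := Nat.mul_comm _ _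
  have hpos : 0 < ((i : ℕ) + 1) * d' := Nat.mul_pos (by omega) hd
  have hub : ((i : ℕ) + 1) * d' ≤ d' + s * Lstar := by omega
  -- evaluate the pooling
  show vext _ (((i : ℕ) + 1) * d' + 0) = _
  rw [Nat.add_zero]
  unfold vext
  rw [dif_pos ⟨by omega, hub⟩]
  rw [iterConvVec_eq hwsupp x Lstar ⟨((i : ℕ) + 1) * d' - 1, by omega⟩, hiter]
  simp only [Matrix.mulVec, dotProduct]
  refine Finset.sum_congr rfl fun k _ => ?_
  congr 1
  have hexp : ((i : ℕ) + 1) * d' = (i : ℕ) * d' + d' := by ring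
  have harg : ((((i : ℕ) + 1) * d' - 1 : ℕ) : ℤ) - ((k : ℕ) : ℤ)
      = (((i : ℕ) * d' + (d' - 1 - (k : ℕ)) : ℕ) : ℤ) := by
    have hk := k.isLt
    push_cast [Nat.cast_sub (by omega : 1 ≤ ((i : ℕ) + 1) * d'),
      Nat.cast_sub (by omega : (k : ℕ) ≤ d' - 1), Nat.cast_sub (by omega : 1 ≤ d')]
    push_cast
    ring
  rw [show (((⟨((i : ℕ) + 1) * d' - 1, by omega⟩ : Fin (d' + s * Lstar)) : ℕ) : ℤ)
    = ((((i : ℕ) + 1) * d' - 1 : ℕ) : ℤ) from rfl, harg, targetSeq_eval]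
end
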